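/- (Independent-set structure in the GenAVA clique reduction) Given a graph G = (V,E), construct the GenAVA instance with a buyer j_v per vertex (ρ_{j_v} = 1), a vertex item i_v of cost M + deg(v) with value M for j_v and 0 otherwise, and an edge item i_e per edge e of cost 0 with value 1 for both endpoints' buyers and 0 otherwise, where M = 2|E|/n^ε. Then in any feasible allocation, the set U of vertices v whose buyer receives the vertex item i_v is an independent set in G; conversely, for any independent set U there is a feasible allocation allocating i_v to j_v for all v ∈ U and all edge items to some buyer. Consequently the optimal value equals α(G)·M + |E|, where α(G) is the independence number. -/

import Mathlib

open scoped Classical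

/-- Items of the GenAVA clique-reduction instance: a vertex item per vertex and
an edge item per edge of `G`. -/
abbrev cliqueItem (n : ℕ) (G : SimpleGraph (Fin n)) [DecidableRel G.Adj] :=
  Fin n ⊕ {e : Sym2 (Fin n) // e ∈ G.edgeFinset}

/-- Value of an item for a buyer: vertex item `i_v` has value `M` for buyer
`j_v` and `0` otherwise; edge item `i_e` has value `1` for the buyers of the
endpoints of `e` and `0` otherwise. -/
noncomputable def cliqueVal (n : ℕ) (G : SimpleGraph (Fin n)) [DecidableRel G.Adj]
    (M : ℝ) : cliqueItem n G → Fin n → ℝ :=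
  fun it b =>
    Sum.elim (fun u => if b = u then M else 0)
      (fun e => if b ∈ (e : Sym2 (Fin n)) then 1 else 0) it

/-- Cost of an item: vertex item `i_v` costs `M + deg(v)`, edge items cost 0. -/
noncomputable def cliqueCost (n : ℕ) (G : SimpleGraph (Fin n)) [DecidableRel G.Adj]
    (M : ℝ) : cliqueItem n G → ℝ :=
  fun it => Sum.elim (fun u => M + (G.degree u : ℝ)) (fun _ => 0) it

/-- GenAVA feasibility with `ρ_j = 1`: each buyer's allocated value is at least
their allocated cost. -/
def cliqueFeasible (n : ℕ) (G : SimpleGraph (Fin n)) [DecidableRel G.Adj] (M : ℝ)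
    (x : cliqueItem n G → Option (Fin n)) : Prop :=
  ∀ b : Fin n,
    ∑ it ∈ Finset.univ.filter fun it => x it = some b, cliqueCost n G M it ≤
    ∑ it ∈ Finset.univ.filter fun it => x it = some b, cliqueVal n G M it b

/-- Welfare of an allocation. -/
noncomputable def cliqueValue (n : ℕ) (G : SimpleGraph (Fin n)) [DecidableRel G.Adj]
    (M : ℝ) (x : cliqueItem n G → Option (Fin n)) : ℝ :=
  ∑ it, ((x it).map (cliqueVal n G M it)).getD 0

section helpers
variable {n : ℕ} {G : SimpleGraph (Fin n)} [DecidableRel G.Adj] {M : ℝ}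

lemma feas_iff (x : cliqueItem n G → Option (Fin n)) :
    cliqueFeasible n G M x ↔ ∀ b : Fin n,
      (∑ w : Fin n, if x (Sum.inl w) = some b then M + (G.degree w : ℝ) else 0) ≤
      (∑ w : Fin n, if x (Sum.inl w) = some b then (if b = w then M else 0) else 0) +
      (∑ e : {e : Sym2 (Fin n) // e ∈ G.edgeFinset},
        if x (Sum.inr e) = some b then (if b ∈ (e : Sym2 (Fin n)) then (1:ℝ) else 0) else 0) := by
  unfold cliqueFeasible
  refine forall_congr' fun b => ?_
  rw [Finset.sum_filter, Finset.sum_filter, Fintype.sum_sum_type, Fintype.sum_sum_type]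
  simp [cliqueCost, cliqueVal, Functor.map, Sum.map, Sum.bind, Function.comp]

lemma alloc_incident (hM : 0 ≤ M) (x : cliqueItem n G → Option (Fin n))
    (hx : cliqueFeasible n G M x) (u : Fin n) (hu : x (Sum.inl u) = some u)
    (e : {e : Sym2 (Fin n) // e ∈ G.edgeFinset}) (he : u ∈ (e : Sym2 (Fin n))) :
    x (Sum.inr e) = some u := by
  classical
  by_contra hne
  have h := (feas_iff x).1 hx u
  -- lower bound on the cost sum
  have hC : M + (G.degree u : ℝ) ≤
      ∑ w : Fin n, if x (Sum.inl w) = some u then M + (G.degree w : ℝ) else 0 := by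
    have := Finset.single_le_sum (f := fun w : Fin n =>
      if x (Sum.inl w) = some u then M + (G.degree w : ℝ) else 0)
      (fun w _ => by positivity) (Finset.mem_univ u)
    simpa [hu] using this
  -- upper bound on vertex-value sum
  have hVv : (∑ w : Fin n, if x (Sum.inl w) = some u then (if u = w then M else 0) else 0) ≤ M := by
    have h1 : ∀ w : Fin n, (if x (Sum.inl w) = some u then (if u = w then M else 0) else 0) ≤
        (if u = w then M else 0) := by
      intro w; split
      · exact le_rfl
      · split
        · exact hM
        · exact le_rfl
    calc _ ≤ ∑ w : Fin n, if u = w then M else 0 := Finset.sum_le_sum (fun w _ => h1 w)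
      _ = M := by simp
  -- the edge-value sum is a cardinality
  set F : Finset {e : Sym2 (Fin n) // e ∈ G.edgeFinset} :=
    Finset.univ.filter (fun f => x (Sum.inr f) = some u ∧ u ∈ (f : Sym2 (Fin n))) with hF
  have hVe : (∑ f : {e : Sym2 (Fin n) // e ∈ G.edgeFinset},
      if x (Sum.inr f) = some u then (if u ∈ (f : Sym2 (Fin n)) then (1:ℝ) else 0) else 0)
      = (F.card : ℝ) := by
    rw [hF, ← Finset.sum_boole]
    congr 1; ext f
    by_cases h1 : x (Sum.inr f) = some u <;> by_cases h2 : u ∈ (f : Sym2 (Fin n)) <;>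
      simp [h1, h2]
  -- degree u ≤ F.card
  have hdF : G.degree u ≤ F.card := by
    have : (G.degree u : ℝ) ≤ (F.card : ℝ) := by
      rw [hVe] at h; linarith
    exact_mod_cast this
  -- but F injects into incidence minus e
  have hmem : (e : Sym2 (Fin n)) ∈ G.incidenceFinset u := by
    rw [SimpleGraph.incidenceFinset_eq_filter, Finset.mem_filter]
    exact ⟨e.2, he⟩
  have hsub : F.image Subtype.val ⊆ (G.incidenceFinset u).erase (e : Sym2 (Fin n)) := by
    intro f hf
    rcases Finset.mem_image.1 hf with ⟨g, hg, rfl⟩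
    rw [hF, Finset.mem_filter] at hg
    refine Finset.mem_erase.2 ⟨?_, ?_⟩
    · intro hgv
      exact hne (Subtype.ext hgv ▸ hg.2.1)
    · rw [SimpleGraph.incidenceFinset_eq_filter, Finset.mem_filter]
      exact ⟨g.2, hg.2.2⟩
  have hcard : F.card ≤ G.degree u - 1 := by
    have h1 : (F.image Subtype.val).card = F.card :=
      Finset.card_image_of_injective _ Subtype.val_injective
    have h2 := Finset.card_le_card hsub
    rw [Finset.card_erase_of_mem hmem, SimpleGraph.card_incidenceFinset_eq_degree] at h2
    omega
  have hdeg : 1 ≤ G.degree u := by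
    have : 0 < (G.incidenceFinset u).card := Finset.card_pos.2 ⟨_, hmem⟩
    rwa [SimpleGraph.card_incidenceFinset_eq_degree] at this
  omega

noncomputable def cliquePick (U : Finset (Fin n)) (e : Sym2 (Fin n)) : Fin n :=
  if h : ∃ u, u ∈ U ∧ u ∈ e then h.choose else (Quot.out e).1

lemma cliquePick_mem (U : Finset (Fin n)) (e : Sym2 (Fin n)) : cliquePick U e ∈ e := by
  unfold cliquePick
  split
  · next h => exact h.choose_spec.2
  · exact Sym2.out_fst_mem e

lemma cliquePick_eq (U : Finset (Fin n)) (hU : ∀ u ∈ U, ∀ w ∈ U, ¬ G.Adj u w)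
    {u : Fin n} {e : Sym2 (Fin n)} (hu : u ∈ U) (hue : u ∈ e) (he : e ∈ G.edgeFinset) :
    cliquePick U e = u := by
  unfold cliquePick
  have h : ∃ v, v ∈ U ∧ v ∈ e := ⟨u, hu, hue⟩
  rw [dif_pos h]
  by_contra hne
  have hw := h.choose_spec
  have heq : e = s(h.choose, u) := (Sym2.mem_and_mem_iff hne).1 ⟨hw.2, hue⟩
  rw [heq] at he
  exact hU _ hw.1 _ hu (SimpleGraph.mem_edgeFinset.1 he)

variable (G) in
noncomputable def cliqueAlloc (U : Finset (Fin n)) : cliqueItem n G → Option (Fin n) :=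
  Sum.elim (fun w => if w ∈ U then some w else none)
    (fun e => some (cliquePick U (e : Sym2 (Fin n))))

lemma cliqueAlloc_feasible (hM : 0 ≤ M) (U : Finset (Fin n))
    (hU : ∀ u ∈ U, ∀ w ∈ U, ¬ G.Adj u w) :
    cliqueFeasible n G M (cliqueAlloc G U) := by
  classical
  rw [feas_iff]
  intro b
  by_cases hb : b ∈ U
  · -- cost sum equals M + degree b
    have hcond : ∀ w : Fin n, (cliqueAlloc G U (Sum.inl w) = some b) ↔ w = b := by
      intro w
      simp only [cliqueAlloc, Sum.elim_inl]
      constructor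
      · intro h
        split at h
        · exact Option.some_inj.1 h
        · exact absurd h (by simp)
      · rintro rfl; simp [hb]
    have hC : (∑ w : Fin n, if cliqueAlloc G U (Sum.inl w) = some b
        then M + (G.degree w : ℝ) else 0) = M + (G.degree b : ℝ) := by
      simp only [hcond]
      simp
    have hVv : M ≤ ∑ w : Fin n, if cliqueAlloc G U (Sum.inl w) = some b
        then (if b = w then M else 0) else 0 := by
      have := Finset.single_le_sum (f := fun w : Fin n =>
        if cliqueAlloc G U (Sum.inl w) = some b then (if b = w then M else 0) else 0)
        (fun w _ => by split <;> [skip; exact le_rfl] <;> split <;> [exact hM; exact le_rfl])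
        (Finset.mem_univ b)
      simpa [(hcond b).2 rfl] using this
    have hVe : (G.degree b : ℝ) ≤
        ∑ e : {e : Sym2 (Fin n) // e ∈ G.edgeFinset},
          if cliqueAlloc G U (Sum.inr e) = some b
          then (if b ∈ (e : Sym2 (Fin n)) then (1:ℝ) else 0) else 0 := by
      have hterm : ∀ e : {e : Sym2 (Fin n) // e ∈ G.edgeFinset},
          (if b ∈ (e : Sym2 (Fin n)) then (1:ℝ) else 0) ≤
          (if cliqueAlloc G U (Sum.inr e) = some b
            then (if b ∈ (e : Sym2 (Fin n)) then (1:ℝ) else 0) else 0) := by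
        intro e
        by_cases hbe : b ∈ (e : Sym2 (Fin n))
        · have : cliqueAlloc G U (Sum.inr e) = some b := by
            simp only [cliqueAlloc, Sum.elim_inr, Option.some_inj]
            exact cliquePick_eq U hU hb hbe e.2
          simp [this, hbe]
        · simp [hbe]
      calc (G.degree b : ℝ)
          = ∑ e ∈ G.edgeFinset, (if b ∈ e then (1:ℝ) else 0) := by
            rw [Finset.sum_boole, ← SimpleGraph.incidenceFinset_eq_filter,
              SimpleGraph.card_incidenceFinset_eq_degree]
        _ = ∑ e : {e : Sym2 (Fin n) // e ∈ G.edgeFinset},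
              (if b ∈ (e : Sym2 (Fin n)) then (1:ℝ) else 0) :=
            (Finset.sum_coe_sort G.edgeFinset (fun e => if b ∈ e then (1:ℝ) else 0)).symm
        _ ≤ _ := Finset.sum_le_sum (fun e _ => hterm e)
    rw [hC]
    linarith
  · -- buyer not in U receives no vertex items
    have hC : (∑ w : Fin n, if cliqueAlloc G U (Sum.inl w) = some b
        then M + (G.degree w : ℝ) else 0) = 0 := by
      apply Finset.sum_eq_zero
      intro w _
      rw [if_neg]
      intro h
      simp only [cliqueAlloc, Sum.elim_inl] at h
      split at h
      · next hw => exact hb (Option.some_inj.1 h ▸ hw)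
      · exact absurd h (by simp)
    rw [hC]
    have h1 : (0:ℝ) ≤ ∑ w : Fin n, if cliqueAlloc G U (Sum.inl w) = some b
        then (if b = w then M else 0) else 0 :=
      Finset.sum_nonneg fun w _ => by
        split <;> [skip; exact le_rfl] <;> split <;> [exact hM; exact le_rfl]
    have h2 : (0:ℝ) ≤ ∑ e : {e : Sym2 (Fin n) // e ∈ G.edgeFinset},
        if cliqueAlloc G U (Sum.inr e) = some b
        then (if b ∈ (e : Sym2 (Fin n)) then (1:ℝ) else 0) else 0 :=
      Finset.sum_nonneg fun e _ => by
        split <;> [skip; exact le_rfl] <;> split <;> norm_num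
    linarith

lemma cliqueValue_alloc (U : Finset (Fin n)) :
    cliqueValue n G M (cliqueAlloc G U) = U.card * M + G.edgeFinset.card := by
  classical
  unfold cliqueValue
  rw [Fintype.sum_sum_type]
  have h1 : (∑ w : Fin n,
      ((cliqueAlloc G U (Sum.inl w)).map (cliqueVal n G M (Sum.inl w))).getD 0)
      = U.card * M := by
    have hterm : ∀ w : Fin n,
        ((cliqueAlloc G U (Sum.inl w)).map (cliqueVal n G M (Sum.inl w))).getD 0
        = if w ∈ U then M else 0 := by
      intro w
      by_cases hw : w ∈ U <;> simp [cliqueAlloc, hw, cliqueVal, Functor.map, Sum.map, Sum.bind, Function.comp]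
    rw [Finset.sum_congr rfl (fun w _ => hterm w), Finset.sum_ite_mem,
      Finset.univ_inter, Finset.sum_const, nsmul_eq_mul]
  have h2 : (∑ e : {e : Sym2 (Fin n) // e ∈ G.edgeFinset},
      ((cliqueAlloc G U (Sum.inr e)).map (cliqueVal n G M (Sum.inr e))).getD 0)
      = G.edgeFinset.card := by
    have hterm : ∀ e : {e : Sym2 (Fin n) // e ∈ G.edgeFinset},
        ((cliqueAlloc G U (Sum.inr e)).map (cliqueVal n G M (Sum.inr e))).getD 0 = 1 := by
      intro e
      simp [cliqueAlloc, cliqueVal, cliquePick_mem U (e : Sym2 (Fin n)), Functor.map, Sum.map, Sum.bind, Function.comp]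
    rw [Finset.sum_congr rfl (fun e _ => hterm e), Finset.sum_const, nsmul_eq_mul,
      mul_one, Finset.card_univ, Fintype.card_coe]
  rw [h1, h2]

end helpers

/-- Independent-set structure in the GenAVA clique reduction: (1) in any
feasible allocation, vertices whose buyer receives their vertex item form an
independent set; (2) conversely, any independent set induces a feasible
allocation serving those vertex items and all edge items; hence (3)–(4) the
optimal welfare equals `α(G)·M + |E|`. -/
theorem stmt_15 (n : ℕ) (hn : 0 < n) (G : SimpleGraph (Fin n)) [DecidableRel G.Adj]
    (ε M : ℝ) (hε : 0 < ε)
    (hM : M = 2 * (G.edgeFinset.card : ℝ) / (n : ℝ) ^ ε)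
    (a : ℕ)
    (hmax : IsGreatest {c : ℕ | ∃ U : Finset (Fin n),
      (∀ u ∈ U, ∀ w ∈ U, ¬ G.Adj u w) ∧ U.card = c} a) :
    (∀ x : cliqueItem n G → Option (Fin n), cliqueFeasible n G M x →
      ∀ u v : Fin n, x (Sum.inl u) = some u → x (Sum.inl v) = some v →
        ¬ G.Adj u v) ∧
    (∀ U : Finset (Fin n), (∀ u ∈ U, ∀ w ∈ U, ¬ G.Adj u w) →
      ∃ x : cliqueItem n G → Option (Fin n), cliqueFeasible n G M x ∧
        (∀ u ∈ U, x (Sum.inl u) = some u) ∧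
        (∀ e, (x (Sum.inr e)).isSome)) ∧
    (∀ x : cliqueItem n G → Option (Fin n), cliqueFeasible n G M x →
      cliqueValue n G M x ≤ a * M + (G.edgeFinset.card : ℝ)) ∧
    (∃ x : cliqueItem n G → Option (Fin n), cliqueFeasible n G M x ∧
      cliqueValue n G M x = a * M + (G.edgeFinset.card : ℝ)) := by
  classical
  have hM0 : 0 ≤ M := by
    rw [hM]
    have h1 : (0:ℝ) < (n:ℝ) ^ ε := Real.rpow_pos_of_pos (by exact_mod_cast hn) ε
    positivity
  have part1 : ∀ x : cliqueItem n G → Option (Fin n), cliqueFeasible n G M x →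
      ∀ u v : Fin n, x (Sum.inl u) = some u → x (Sum.inl v) = some v → ¬ G.Adj u v := by
    intro x hx u v hu hv hadj
    set e0 : {e : Sym2 (Fin n) // e ∈ G.edgeFinset} :=
      ⟨s(u, v), SimpleGraph.mem_edgeFinset.2 hadj⟩ with he0
    have h1 : x (Sum.inr e0) = some u :=
      alloc_incident hM0 x hx u hu e0 (Sym2.mem_mk_left u v)
    have h2 : x (Sum.inr e0) = some v :=
      alloc_incident hM0 x hx v hv e0 (Sym2.mem_mk_right u v)
    exact G.ne_of_adj hadj (Option.some_inj.1 (h1.symm.trans h2))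
  refine ⟨part1, ?_, ?_, ?_⟩
  · intro U hU
    exact ⟨cliqueAlloc G U, cliqueAlloc_feasible hM0 U hU,
      fun u hu => by simp [cliqueAlloc, hu], fun e => rfl⟩
  · intro x hx
    unfold cliqueValue
    rw [Fintype.sum_sum_type]
    set Uc : Finset (Fin n) := Finset.univ.filter (fun w => x (Sum.inl w) = some w) with hUc
    have hind : ∀ u ∈ Uc, ∀ w ∈ Uc, ¬ G.Adj u w := by
      intro u hu w hw
      rw [hUc, Finset.mem_filter] at hu hw
      exact part1 x hx u w hu.2 hw.2
    have hcard : Uc.card ≤ a := hmax.2 ⟨Uc, hind, rfl⟩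
    have h1 : (∑ w : Fin n, ((x (Sum.inl w)).map (cliqueVal n G M (Sum.inl w))).getD 0)
        ≤ (a : ℝ) * M := by
      have hterm : ∀ w : Fin n,
          ((x (Sum.inl w)).map (cliqueVal n G M (Sum.inl w))).getD 0
          = if x (Sum.inl w) = some w then M else 0 := by
        intro w
        cases h : x (Sum.inl w) with
        | none => simp [h]
        | some b =>
          by_cases hbw : b = w <;>
            simp [h, cliqueVal, hbw, Functor.map, Sum.map, Sum.bind, Function.comp]
      rw [Finset.sum_congr rfl (fun w _ => hterm w), ← Finset.sum_filter, ← hUc,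
        Finset.sum_const, nsmul_eq_mul]
      exact mul_le_mul_of_nonneg_right (by exact_mod_cast hcard) hM0
    have h2 : (∑ e : {e : Sym2 (Fin n) // e ∈ G.edgeFinset},
        ((x (Sum.inr e)).map (cliqueVal n G M (Sum.inr e))).getD 0)
        ≤ (G.edgeFinset.card : ℝ) := by
      have hterm : ∀ e : {e : Sym2 (Fin n) // e ∈ G.edgeFinset},
          ((x (Sum.inr e)).map (cliqueVal n G M (Sum.inr e))).getD 0 ≤ 1 := by
        intro e
        cases h : x (Sum.inr e) with
        | none => simp [h]
        | some b =>
          simp only [h, Option.map_some, Option.getD_some]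
          by_cases hbe : b ∈ (e : Sym2 (Fin n)) <;>
            simp [cliqueVal, hbe, Functor.map, Sum.map, Sum.bind, Function.comp]
      calc _ ≤ ∑ _e : {e : Sym2 (Fin n) // e ∈ G.edgeFinset}, (1:ℝ) :=
            Finset.sum_le_sum (fun e _ => hterm e)
        _ = (G.edgeFinset.card : ℝ) := by
            rw [Finset.sum_const, nsmul_eq_mul, mul_one, Finset.card_univ, Fintype.card_coe]
    linarith
  · obtain ⟨U, hU, hUcard⟩ := hmax.1
    exact ⟨cliqueAlloc G U, cliqueAlloc_feasible hM0 U hU,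
      by rw [cliqueValue_alloc, hUcard]⟩
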